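/- Let δ ∈ (0, π/2) and C₀ > 0, and let G : ℂ → ℂ be continuous on the closed strip {ξ : |Im ξ| ≤ δ}, holomorphic on its interior, and satisfy |G(ξ)| ≤ C₀·(1 + |Re ξ|)^{−2} on the strip. Then there exists a constant C > 0 such that for every x ∈ ℝ and every z ∈ [−1, 0]: |∫_ℝ e^{i x ξ}·(cosh((z+1)ξ)/cosh ξ)·G(ξ) dξ| ≤ C·e^{−δ|x|}, where the integral is over real ξ. -/

import Mathlib

open MeasureTheory Complex Real

open Set Filter

lemma cosh_repr (ξ : ℂ) : Complex.cosh ξ =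
    ((Real.cosh ξ.re * Real.cos ξ.im : ℝ) : ℂ) +
      ((Real.sinh ξ.re * Real.sin ξ.im : ℝ) : ℂ) * Complex.I := by
  conv_lhs => rw [← Complex.re_add_im ξ]
  rw [Complex.cosh_add, Complex.cosh_mul_I, Complex.sinh_mul_I]
  push_cast
  ring

/-- Lower bound for `cosh` on a strip. -/
lemma cosh_abs_lower {δ : ℝ} (hδ0 : 0 < δ) (hδ : δ < Real.pi / 2) {ξ : ℂ}
    (hξ : |ξ.im| ≤ δ) :
    Real.cos δ * Real.cosh ξ.re ≤ ‖Complex.cosh ξ‖ := by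
  have hre : (Complex.cosh ξ).re = Real.cosh ξ.re * Real.cos ξ.im := by
    rw [cosh_repr ξ]
    simp only [Complex.add_re, Complex.ofReal_re, Complex.mul_re, Complex.I_re,
      Complex.I_im, Complex.ofReal_im, mul_zero, mul_one, zero_mul, sub_zero, add_zero]
  have hcos : Real.cos δ ≤ Real.cos ξ.im := by
    rw [← Real.cos_abs ξ.im]
    exact Real.cos_le_cos_of_nonneg_of_le_pi (abs_nonneg _)
      (by linarith [Real.pi_pos]) hξ
  have hcosδ : 0 < Real.cos δ :=
    Real.cos_pos_of_mem_Ioo ⟨by linarith, hδ⟩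
  calc Real.cos δ * Real.cosh ξ.re ≤ Real.cos ξ.im * Real.cosh ξ.re := by
        nlinarith [(Real.cosh_pos (x := ξ.re)).le]
    _ = |(Complex.cosh ξ).re| := by
        rw [hre, _root_.abs_of_nonneg (by nlinarith [Real.cosh_pos (x := ξ.re)])]
        ring
    _ ≤ ‖Complex.cosh ξ‖ := Complex.abs_re_le_norm _

/-- Upper bound for `cosh`. -/
lemma cosh_abs_upper (ξ : ℂ) : ‖Complex.cosh ξ‖ ≤ Real.cosh ξ.re := by
  rw [cosh_repr ξ, Complex.norm_add_mul_I]
  refine le_trans (Real.sqrt_le_sqrt ?_) (le_of_eq (Real.sqrt_sq (Real.cosh_pos (x := ξ.re)).le))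
  nlinarith [Real.sin_sq_add_cos_sq ξ.im, Real.cosh_sq_sub_sinh_sq ξ.re,
    Real.cosh_pos (x := ξ.re)]

/-- The kernel `cosh (s ξ) / cosh ξ` is bounded on the strip. -/
lemma kernel_bound {δ : ℝ} (hδ0 : 0 < δ) (hδ : δ < Real.pi / 2) {s : ℝ}
    (hs0 : 0 ≤ s) (hs1 : s ≤ 1) {ξ : ℂ} (hξ : |ξ.im| ≤ δ) :
    ‖Complex.cosh ((s : ℂ) * ξ) / Complex.cosh ξ‖ ≤ 1 / Real.cos δ := by
  have hcosδ : 0 < Real.cos δ := Real.cos_pos_of_mem_Ioo ⟨by linarith, hδ⟩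
  have hlow := cosh_abs_lower hδ0 hδ hξ
  have hpos : 0 < ‖Complex.cosh ξ‖ :=
    lt_of_lt_of_le (by positivity) hlow
  have hup : ‖Complex.cosh ((s : ℂ) * ξ)‖ ≤ Real.cosh ξ.re := by
    refine le_trans (cosh_abs_upper _) ?_
    have hre : ((s : ℂ) * ξ).re = s * ξ.re := by
      simp [Complex.mul_re]
    rw [hre, Real.cosh_le_cosh]
    calc |s * ξ.re| = s * |ξ.re| := by rw [abs_mul, _root_.abs_of_nonneg hs0]
      _ ≤ 1 * |ξ.re| := by nlinarith [abs_nonneg ξ.re]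
      _ = |ξ.re| := one_mul _
  rw [norm_div]
  rw [div_le_div_iff₀ hpos (by positivity)]
  calc ‖Complex.cosh ((s : ℂ) * ξ)‖ * Real.cos δ
      ≤ Real.cosh ξ.re * Real.cos δ := by nlinarith
    _ = Real.cos δ * Real.cosh ξ.re := by ring
    _ ≤ ‖Complex.cosh ξ‖ := hlow
    _ = 1 * ‖Complex.cosh ξ‖ := (one_mul _).symm

/-- Integrability along a horizontal line. -/
lemma line_integrable {δ M : ℝ} (hM : 0 ≤ M) (f : ℂ → ℂ)
    (hc : ContinuousOn f {ξ : ℂ | |ξ.im| ≤ δ})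
    (hbd : ∀ ξ : ℂ, |ξ.im| ≤ δ → ‖f ξ‖ ≤ M / (1 + |ξ.re|) ^ 2)
    {c : ℝ} (hcδ : |c| ≤ δ) :
    Integrable (fun t : ℝ => f ((t : ℂ) + (c : ℂ) * Complex.I)) := by
  have hmem : ∀ t : ℝ, ((t : ℂ) + (c : ℂ) * Complex.I) ∈ {ξ : ℂ | |ξ.im| ≤ δ} := by
    intro t; simp [hcδ]
  have hcont : Continuous fun t : ℝ => f ((t : ℂ) + (c : ℂ) * Complex.I) :=
    hc.comp_continuous (by continuity) hmem
  refine (integrable_inv_one_add_sq.const_mul M).mono' hcont.aestronglyMeasurable ?_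
  filter_upwards with t
  have him : ((t : ℂ) + (c : ℂ) * Complex.I).im = c := by simp
  have hre : ((t : ℂ) + (c : ℂ) * Complex.I).re = t := by simp
  have h1 := hbd _ (him ▸ hcδ)
  rw [hre] at h1
  have h2 : M / (1 + |t|) ^ 2 ≤ M * (1 + t ^ 2)⁻¹ := by
    rw [div_eq_mul_inv]
    have hpos : (0:ℝ) < 1 + t ^ 2 := by positivity
    have hle : 1 + t ^ 2 ≤ (1 + |t|) ^ 2 := by
      nlinarith [abs_nonneg t, _root_.sq_abs t]
    gcongr
  calc ‖f ((t : ℂ) + (c : ℂ) * Complex.I)‖ = ‖f ((t : ℂ) + (c : ℂ) * Complex.I)‖ := rfl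
    _ ≤ M / (1 + |t|) ^ 2 := h1
    _ ≤ M * (1 + t ^ 2)⁻¹ := h2

/-- Contour shift between two horizontal lines inside the strip. -/
lemma shift_line {δ M : ℝ} (hδ0 : 0 < δ) (hM : 0 ≤ M) (f : ℂ → ℂ)
    (hc : ContinuousOn f {ξ : ℂ | |ξ.im| ≤ δ})
    (hd : DifferentiableOn ℂ f {ξ : ℂ | |ξ.im| < δ})
    (hbd : ∀ ξ : ℂ, |ξ.im| ≤ δ → ‖f ξ‖ ≤ M / (1 + |ξ.re|) ^ 2)
    {a b : ℝ} (hab : a ≤ b) (ha : -δ ≤ a) (hb : b ≤ δ) :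
    ∫ t : ℝ, f ((t : ℂ) + (a : ℂ) * Complex.I)
      = ∫ t : ℝ, f ((t : ℂ) + (b : ℂ) * Complex.I) := by
  have haδ : |a| ≤ δ := abs_le.2 ⟨ha, le_trans hab hb⟩
  have hbδ : |b| ≤ δ := abs_le.2 ⟨le_trans ha hab, hb⟩
  have hIa := line_integrable hM f hc hbd haδ
  have hIb := line_integrable hM f hc hbd hbδ
  -- rectangle identity for R ≥ 0
  have key : ∀ R : ℝ, 0 ≤ R →
      (∫ t : ℝ in -R..R, f ((t : ℂ) + (a : ℂ) * Complex.I)) -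
        (∫ t : ℝ in -R..R, f ((t : ℂ) + (b : ℂ) * Complex.I)) =
      Complex.I • (∫ y : ℝ in a..b, f ((-R : ℝ) + (y : ℂ) * Complex.I)) -
        Complex.I • (∫ y : ℝ in a..b, f ((R : ℝ) + (y : ℂ) * Complex.I)) := by
    intro R hR
    have hz : (Complex.mk (-R) a).re = -R := rfl
    have hrect := Complex.integral_boundary_rect_eq_zero_of_continuousOn_of_differentiableOn
      f (Complex.mk (-R) a) (Complex.mk R b) ?_ ?_
    · have h1 : (Complex.mk (-R) a).re = -R := rfl
      have h2 : (Complex.mk (-R) a).im = a := rfl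
      have h3 : (Complex.mk R b).re = R := rfl
      have h4 : (Complex.mk R b).im = b := rfl
      rw [h1, h2, h3, h4] at hrect
      simp only [smul_eq_mul] at hrect ⊢
      linear_combination hrect
    · -- continuity on closed rectangle
      refine hc.mono ?_
      intro ξ hξ
      rw [Complex.mem_reProdIm] at hξ
      have h4 : ξ.im ∈ uIcc a b := hξ.2
      rw [uIcc_of_le hab] at h4
      exact abs_le.2 ⟨le_trans ha h4.1, le_trans h4.2 hb⟩
    · -- differentiability on open rectangle
      refine hd.mono ?_
      intro ξ hξ
      rw [Complex.mem_reProdIm] at hξ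
      have h4 : ξ.im ∈ Set.Ioo (min a b) (max a b) := hξ.2
      rw [min_eq_left hab, max_eq_right hab] at h4
      exact abs_lt.2 ⟨lt_of_le_of_lt (by linarith) h4.1, lt_of_lt_of_le h4.2 hb⟩
  -- limits
  have hlim_a : Tendsto (fun R : ℝ => ∫ t : ℝ in -R..R, f ((t : ℂ) + (a : ℂ) * Complex.I))
      atTop (nhds (∫ t : ℝ, f ((t : ℂ) + (a : ℂ) * Complex.I))) :=
    intervalIntegral_tendsto_integral hIa tendsto_neg_atTop_atBot tendsto_id
  have hlim_b : Tendsto (fun R : ℝ => ∫ t : ℝ in -R..R, f ((t : ℂ) + (b : ℂ) * Complex.I))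
      atTop (nhds (∫ t : ℝ, f ((t : ℂ) + (b : ℂ) * Complex.I))) :=
    intervalIntegral_tendsto_integral hIb tendsto_neg_atTop_atBot tendsto_id
  -- vertical integrals vanish
  have hvert : ∀ R : ℝ,
      ‖Complex.I • (∫ y : ℝ in a..b, f ((-R : ℝ) + (y : ℂ) * Complex.I)) -
        Complex.I • (∫ y : ℝ in a..b, f ((R : ℝ) + (y : ℂ) * Complex.I))‖
      ≤ 2 * (M / (1 + |R|) ^ 2 * |b - a|) := by
    intro R
    have hbnd : ∀ u : ℝ, ‖(∫ y : ℝ in a..b, f ((u : ℝ) + (y : ℂ) * Complex.I))‖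
        ≤ M / (1 + |u|) ^ 2 * |b - a| := by
      intro u
      refine intervalIntegral.norm_integral_le_of_norm_le_const ?_
      intro y hy
      have hy' : y ∈ Set.Icc a b := Set.mem_Icc_of_Ioc (uIoc_of_le hab ▸ hy)
      have hyδ : |((u : ℂ) + (y : ℂ) * Complex.I).im| ≤ δ := by
        simp only [Complex.add_im, Complex.ofReal_im, Complex.mul_im, Complex.ofReal_re,
          Complex.I_im, Complex.I_re, mul_zero, mul_one, zero_add, add_zero]
        exact abs_le.2 ⟨le_trans ha hy'.1, le_trans hy'.2 hb⟩
      have := hbd _ hyδ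
      simpa using this
    calc ‖Complex.I • (∫ y : ℝ in a..b, f ((-R : ℝ) + (y : ℂ) * Complex.I)) -
        Complex.I • (∫ y : ℝ in a..b, f ((R : ℝ) + (y : ℂ) * Complex.I))‖
        ≤ ‖Complex.I • (∫ y : ℝ in a..b, f ((-R : ℝ) + (y : ℂ) * Complex.I))‖ +
          ‖Complex.I • (∫ y : ℝ in a..b, f ((R : ℝ) + (y : ℂ) * Complex.I))‖ :=
        norm_sub_le _ _
      _ ≤ M / (1 + |R|) ^ 2 * |b - a| + M / (1 + |R|) ^ 2 * |b - a| := by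
          rw [norm_smul, norm_smul]
          simp only [Complex.norm_I, one_mul]
          gcongr
          · exact le_trans (hbnd (-R)) (by rw [abs_neg])
          · exact hbnd R
      _ = 2 * (M / (1 + |R|) ^ 2 * |b - a|) := by ring
  have hvert0 : Tendsto (fun R : ℝ =>
      Complex.I • (∫ y : ℝ in a..b, f ((-R : ℝ) + (y : ℂ) * Complex.I)) -
        Complex.I • (∫ y : ℝ in a..b, f ((R : ℝ) + (y : ℂ) * Complex.I)))
      atTop (nhds 0) := by
    apply squeeze_zero_norm hvert
    have h1 : Tendsto (fun R : ℝ => (1 + |R|) ^ 2) atTop atTop := by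
      exact (tendsto_pow_atTop (two_ne_zero)).comp
        (tendsto_atTop_add_const_left _ 1 tendsto_abs_atTop_atTop)
    have h2 : Tendsto (fun R : ℝ => M / (1 + |R|) ^ 2 * |b - a|) atTop (nhds 0) := by
      have := (h1.inv_tendsto_atTop).const_mul M
      simp only [mul_zero] at this
      have h3 := this.mul_const |b - a|
      simp only [zero_mul] at h3
      simpa [div_eq_mul_inv] using h3
    have := h2.const_mul 2
    simpa using this
  -- combine
  have hdiff : Tendsto (fun R : ℝ =>
      (∫ t : ℝ in -R..R, f ((t : ℂ) + (a : ℂ) * Complex.I)) -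
        (∫ t : ℝ in -R..R, f ((t : ℂ) + (b : ℂ) * Complex.I))) atTop
      (nhds ((∫ t : ℝ, f ((t : ℂ) + (a : ℂ) * Complex.I)) -
        (∫ t : ℝ, f ((t : ℂ) + (b : ℂ) * Complex.I)))) := hlim_a.sub hlim_b
  have heq : (fun R : ℝ =>
      (∫ t : ℝ in -R..R, f ((t : ℂ) + (a : ℂ) * Complex.I)) -
        (∫ t : ℝ in -R..R, f ((t : ℂ) + (b : ℂ) * Complex.I))) =ᶠ[atTop]
      (fun R : ℝ =>
        Complex.I • (∫ y : ℝ in a..b, f ((-R : ℝ) + (y : ℂ) * Complex.I)) -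
          Complex.I • (∫ y : ℝ in a..b, f ((R : ℝ) + (y : ℂ) * Complex.I))) := by
    filter_upwards [eventually_ge_atTop (0:ℝ)] with R hR using key R hR
  have := tendsto_nhds_unique (hdiff.congr' heq) hvert0
  exact sub_eq_zero.1 this

/-- Exponential spatial decay of the harmonic extension of exponentially localized
boundary data, via contour shifting to `Im ξ = ±δ`. -/
theorem harmonic_extension_exponential_decay
    (δ : ℝ) (hδ0 : 0 < δ) (hδ : δ < Real.pi / 2) (C₀ : ℝ) (hC₀ : 0 < C₀)
    (G : ℂ → ℂ)
    (hGcont : ContinuousOn G {ξ : ℂ | |ξ.im| ≤ δ})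
    (hGhol : DifferentiableOn ℂ G {ξ : ℂ | |ξ.im| < δ})
    (hGbound : ∀ ξ : ℂ, |ξ.im| ≤ δ → ‖G ξ‖ ≤ C₀ / (1 + |ξ.re|) ^ 2) :
    ∃ C : ℝ, 0 < C ∧ ∀ x : ℝ, ∀ z ∈ Set.Icc (-1 : ℝ) 0,
      ‖∫ ξ : ℝ, Complex.exp (Complex.I * (x : ℂ) * (ξ : ℂ)) *
          (Complex.cosh (((z : ℂ) + 1) * (ξ : ℂ)) / Complex.cosh (ξ : ℂ)) * G (ξ : ℂ)‖
        ≤ C * Real.exp (-δ * |x|) := by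
  have hcosδ : 0 < Real.cos δ := Real.cos_pos_of_mem_Ioo ⟨by linarith, hδ⟩
  refine ⟨Real.pi * (C₀ / Real.cos δ), by positivity, ?_⟩
  intro x z hz
  set s : ℝ := z + 1 with hs_def
  have hs0 : 0 ≤ s := by simp only [hs_def]; linarith [hz.1]
  have hs1 : s ≤ 1 := by simp only [hs_def]; linarith [hz.2]
  have hzc : ((z : ℂ) + 1) = ((s : ℝ) : ℂ) := by push_cast [hs_def]; ring
  set f : ℂ → ℂ := fun w => Complex.exp (Complex.I * (x : ℂ) * w) *
      (Complex.cosh (((z : ℂ) + 1) * w) / Complex.cosh w) * G w with hf_def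
  -- cosh nonvanishing on the strip
  have hne : ∀ w : ℂ, |w.im| ≤ δ → Complex.cosh w ≠ 0 := by
    intro w hw
    have := cosh_abs_lower hδ0 hδ hw
    have hpos : 0 < ‖Complex.cosh w‖ :=
      lt_of_lt_of_le (by positivity) this
    exact fun h0 => by simp [h0] at hpos
  -- continuity of f on the closed strip
  have hc : ContinuousOn f {ξ : ℂ | |ξ.im| ≤ δ} := by
    apply ContinuousOn.mul _ hGcont
    apply ContinuousOn.mul
    · exact (Complex.continuous_exp.comp (continuous_const.mul continuous_id)).continuousOn
    · exact ContinuousOn.div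
        ((Complex.continuous_cosh.comp (continuous_const.mul continuous_id)).continuousOn)
        Complex.continuous_cosh.continuousOn (fun w hw => hne w hw)
  -- differentiability of f on the open strip
  have hd : DifferentiableOn ℂ f {ξ : ℂ | |ξ.im| < δ} := by
    apply DifferentiableOn.mul _ hGhol
    apply DifferentiableOn.mul
    · exact (Complex.differentiable_exp.comp
        ((differentiable_const _).mul differentiable_id)).differentiableOn
    · exact DifferentiableOn.div
        ((Complex.differentiable_cosh.comp
          ((differentiable_const _).mul differentiable_id)).differentiableOn)
        Complex.differentiable_cosh.differentiableOn
        (fun w hw => hne w (le_of_lt hw))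
  -- exponential factor
  have hexp_re : ∀ w : ℂ, (Complex.I * (x : ℂ) * w).re = -(x * w.im) := by
    intro w
    simp [Complex.mul_re, Complex.mul_im]
  -- pointwise bound of f on the strip
  have hbd : ∀ ξ : ℂ, |ξ.im| ≤ δ → ‖f ξ‖ ≤
      (Real.exp (|x| * δ) * (C₀ / Real.cos δ)) / (1 + |ξ.re|) ^ 2 := by
    intro ξ hξ
    have h1 : ‖Complex.exp (Complex.I * (x : ℂ) * ξ)‖ ≤ Real.exp (|x| * δ) := by
      rw [Complex.norm_exp, hexp_re, Real.exp_le_exp]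
      calc -(x * ξ.im) ≤ |x * ξ.im| := neg_le_abs _
        _ = |x| * |ξ.im| := abs_mul _ _
        _ ≤ |x| * δ := by gcongr
    have h2 : ‖Complex.cosh (((z : ℂ) + 1) * ξ) / Complex.cosh ξ‖
        ≤ 1 / Real.cos δ := by
      rw [hzc]; exact kernel_bound hδ0 hδ hs0 hs1 hξ
    have h3 := hGbound ξ hξ
    have hr2 : (0:ℝ) < (1 + |ξ.re|) ^ 2 := by positivity
    calc ‖f ξ‖
        = ‖Complex.exp (Complex.I * (x : ℂ) * ξ)‖ *
          ‖Complex.cosh (((z : ℂ) + 1) * ξ) / Complex.cosh ξ‖ *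
          ‖G ξ‖ := by simp [hf_def, map_mul]
      _ ≤ Real.exp (|x| * δ) * (1 / Real.cos δ) * (C₀ / (1 + |ξ.re|) ^ 2) := by
          exact mul_le_mul (mul_le_mul h1 h2 (by positivity) (by positivity)) h3
            (by positivity) (by positivity)
      _ = (Real.exp (|x| * δ) * (C₀ / Real.cos δ)) / (1 + |ξ.re|) ^ 2 := by
          field_simp
  have hM0 : 0 ≤ Real.exp (|x| * δ) * (C₀ / Real.cos δ) := by positivity
  -- uniform bound on a line Im = c, with the exact exponential factor
  have hline : ∀ c : ℝ, |c| ≤ δ → ∀ t : ℝ,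
      ‖f ((t : ℂ) + (c : ℂ) * Complex.I)‖ ≤
        (Real.exp (-(x * c)) * (C₀ / Real.cos δ)) * (1 + t ^ 2)⁻¹ := by
    intro c hc' t
    have him : ((t : ℂ) + (c : ℂ) * Complex.I).im = c := by simp
    have hre : ((t : ℂ) + (c : ℂ) * Complex.I).re = t := by simp
    have h1 : ‖Complex.exp (Complex.I * (x : ℂ) * ((t : ℂ) + (c : ℂ) * Complex.I))‖
        = Real.exp (-(x * c)) := by
      rw [Complex.norm_exp, hexp_re, him]
    have h2 : ‖Complex.cosh (((z : ℂ) + 1) * ((t : ℂ) + (c : ℂ) * Complex.I)) /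
        Complex.cosh ((t : ℂ) + (c : ℂ) * Complex.I)‖ ≤ 1 / Real.cos δ := by
      rw [hzc]; exact kernel_bound hδ0 hδ hs0 hs1 (by rw [him]; exact hc')
    have h3 := hGbound _ (by rw [him]; exact hc')
    rw [hre] at h3
    have h4 : C₀ / (1 + |t|) ^ 2 ≤ C₀ * (1 + t ^ 2)⁻¹ := by
      rw [div_eq_mul_inv]
      have hle : 1 + t ^ 2 ≤ (1 + |t|) ^ 2 := by
        nlinarith [abs_nonneg t, _root_.sq_abs t]
      gcongr
    calc ‖f ((t : ℂ) + (c : ℂ) * Complex.I)‖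
        = ‖Complex.exp (Complex.I * (x : ℂ) * ((t : ℂ) + (c : ℂ) * Complex.I))‖ *
          ‖Complex.cosh (((z : ℂ) + 1) * ((t : ℂ) + (c : ℂ) * Complex.I)) /
            Complex.cosh ((t : ℂ) + (c : ℂ) * Complex.I)‖ *
          ‖G ((t : ℂ) + (c : ℂ) * Complex.I)‖ := by simp [hf_def, map_mul]
      _ ≤ Real.exp (-(x * c)) * (1 / Real.cos δ) * (C₀ * (1 + t ^ 2)⁻¹) := by
          rw [h1]
          exact mul_le_mul (mul_le_mul_of_nonneg_left h2 (Real.exp_nonneg _))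
            (le_trans h3 h4) (by positivity) (by positivity)
      _ = (Real.exp (-(x * c)) * (C₀ / Real.cos δ)) * (1 + t ^ 2)⁻¹ := by
          field_simp
  -- estimate of the shifted integral
  have hfinal : ∀ c : ℝ, |c| ≤ δ → -(x * c) = -δ * |x| →
      ‖∫ t : ℝ, f ((t : ℂ) + (c : ℂ) * Complex.I)‖ ≤
        Real.pi * (C₀ / Real.cos δ) * Real.exp (-δ * |x|) := by
    intro c hc' hxc
    have hInt : Integrable (fun t : ℝ =>
        (Real.exp (-(x * c)) * (C₀ / Real.cos δ)) * (1 + t ^ 2)⁻¹) :=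
      integrable_inv_one_add_sq.const_mul _
    have hb := MeasureTheory.norm_integral_le_of_norm_le hInt
      (Filter.Eventually.of_forall (fun t =>
        le_trans (le_rfl) (hline c hc' t)))
    rw [MeasureTheory.integral_const_mul] at hb
    calc ‖∫ t : ℝ, f ((t : ℂ) + (c : ℂ) * Complex.I)‖
        = ‖∫ t : ℝ, f ((t : ℂ) + (c : ℂ) * Complex.I)‖ := rfl
      _ ≤ Real.exp (-(x * c)) * (C₀ / Real.cos δ) * ∫ t : ℝ, (1 + t ^ 2)⁻¹ := hb
      _ = Real.pi * (C₀ / Real.cos δ) * Real.exp (-δ * |x|) := by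
          rw [integral_univ_inv_one_add_sq, hxc]; ring
  -- rewrite the statement integral as an integral over the line Im = 0
  have hzero : (∫ ξ : ℝ, Complex.exp (Complex.I * (x : ℂ) * (ξ : ℂ)) *
      (Complex.cosh (((z : ℂ) + 1) * (ξ : ℂ)) / Complex.cosh (ξ : ℂ)) * G (ξ : ℂ))
      = ∫ t : ℝ, f ((t : ℂ) + ((0 : ℝ) : ℂ) * Complex.I) := by
    congr 1
    funext t
    simp [hf_def]
  rw [hzero]
  rcases le_or_gt 0 x with hx | hx
  · -- shift up to Im = δ
    have hshift := shift_line hδ0 hM0 f hc hd hbd (le_of_lt hδ0) (by linarith) le_rfl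
    rw [hshift]
    exact hfinal δ (by rw [_root_.abs_of_pos hδ0]) (by rw [_root_.abs_of_nonneg hx]; ring)
  · -- shift down to Im = -δ
    have hshift := shift_line hδ0 hM0 f hc hd hbd
      (a := -δ) (b := 0) (by linarith) le_rfl (le_of_lt hδ0)
    rw [← hshift]
    refine hfinal (-δ) (by rw [abs_neg, _root_.abs_of_pos hδ0]) ?_
    rw [_root_.abs_of_neg hx]; ring
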